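/- Suppose ST = λT, SX = μX for every X ∈ V orthogonal to T, and λμ = −ε c². Then G(X, Y, Z, SW) + G(X, Y, W, SZ) = 0 for all X, Y, Z, W ∈ V. (Since h(R(X,Y)Z,W) = ⟨R(X,Y)Z, SW⟩ = G(X,Y,Z,SW) for the second fundamental form h(X,Y) = ⟨SX,Y⟩, this is exactly the semi-parallelity condition R·h = 0; it is the core of the forward direction of Theorem 2: a radially flat hypersurface of S^n × ℝ or H^n × ℝ having T as a principal direction with nonzero principal curvature is semi-parallel.) -/

import Mathlib

open scoped InnerProductSpace

/-- The Gauss quadrilinear form of a hypersurface of `Q^n(ε) × ℝ` with shape operator `S`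
and tangential vertical projection `T`: by the Gauss equation it equals `⟨R(X,Y)Z,W⟩`. -/
noncomputable def gaussForm {V : Type*} [NormedAddCommGroup V] [InnerProductSpace ℝ V]
    (S : V →ₗ[ℝ] V) (T : V) (ε : ℝ) (X Y Z W : V) : ℝ :=
  ε * (⟪X, W⟫_ℝ * ⟪Y, Z⟫_ℝ - ⟪X, Z⟫_ℝ * ⟪Y, W⟫_ℝ
      + ⟪X, T⟫_ℝ * ⟪Z, T⟫_ℝ * ⟪Y, W⟫_ℝ + ⟪Y, T⟫_ℝ * ⟪W, T⟫_ℝ * ⟪X, Z⟫_ℝ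
      - ⟪Y, T⟫_ℝ * ⟪Z, T⟫_ℝ * ⟪X, W⟫_ℝ - ⟪X, T⟫_ℝ * ⟪W, T⟫_ℝ * ⟪Y, Z⟫_ℝ)
    + ⟪S X, W⟫_ℝ * ⟪S Y, Z⟫_ℝ - ⟪S X, Z⟫_ℝ * ⟪S Y, W⟫_ℝ

/-- If `ST = λT`, `SX = μX` for every `X ⊥ T`, and `λμ = −ε c²`, then the hypersurface is
semi-parallel: `G(X,Y,Z,SW) + G(X,Y,W,SZ) = 0` for all `X, Y, Z, W`, i.e. `R·h = 0`. -/
theorem semiParallel_of_radiallyFlat_eigen {V : Type*} [NormedAddCommGroup V]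
    [InnerProductSpace ℝ V] [FiniteDimensional ℝ V]
    (S : V →ₗ[ℝ] V) (hS : S.IsSymmetric) (T : V) (ε c : ℝ)
    (hε : ε = 1 ∨ ε = -1) (hc : ‖T‖ ^ 2 + c ^ 2 = 1)
    (lam μ : ℝ) (hT : S T = lam • T)
    (hX : ∀ X : V, ⟪X, T⟫_ℝ = 0 → S X = μ • X)
    (hlm : lam * μ = -(ε * c ^ 2)) :
    ∀ X Y Z W : V, gaussForm S T ε X Y Z (S W) + gaussForm S T ε X Y W (S Z) = 0 := by
  intro X Y Z W
  by_cases hT0 : T = 0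
  · have hall : ∀ A : V, S A = μ • A := fun A => hX A (by simp [hT0])
    simp only [gaussForm, hall, hT0, inner_zero_right, real_inner_smul_left,
      real_inner_smul_right]
    ring
  · set t : ℝ := ‖T‖ ^ 2 with ht
    have ht0 : t ≠ 0 := by
      simpa [ht] using pow_ne_zero 2 (norm_ne_zero_iff.mpr hT0)
    obtain ⟨k, hkt⟩ : ∃ k : ℝ, k * t = lam - μ := ⟨(lam - μ) / t, by field_simp⟩
    have hTT : ⟪T, T⟫_ℝ = t := real_inner_self_eq_norm_sq T
    -- the key formula for S
    have hSv : ∀ A : V, S A = μ • A + (k * ⟪A, T⟫_ℝ) • T := by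
      intro A
      have horth : ⟪A - (⟪A, T⟫_ℝ / t) • T, T⟫_ℝ = 0 := by
        rw [inner_sub_left, real_inner_smul_left, hTT]
        field_simp
        ring
      have h1 := hX _ horth
      have h2 : S A = S (A - (⟪A, T⟫_ℝ / t) • T) + (⟪A, T⟫_ℝ / t) • S T := by
        rw [← map_smul, ← map_add]
        congr 1
        abel
      rw [h1, hT] at h2
      have key : μ • (A - (⟪A, T⟫_ℝ / t) • T) + (⟪A, T⟫_ℝ / t) • lam • T
          = μ • A + (⟪A, T⟫_ℝ / t * lam - μ * (⟪A, T⟫_ℝ / t)) • T := by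
        module
      have hsc : ⟪A, T⟫_ℝ / t * lam - μ * (⟪A, T⟫_ℝ / t) = k * ⟪A, T⟫_ℝ := by
        field_simp
        linear_combination -⟪A, T⟫_ℝ * hkt
      rw [h2, key, hsc]
    have hℓ : ∀ A B : V, ⟪S A, B⟫_ℝ = μ * ⟪A, B⟫_ℝ + k * ⟪A, T⟫_ℝ * ⟪B, T⟫_ℝ := by
      intro A B
      rw [hSv A, inner_add_left, real_inner_smul_left, real_inner_smul_left,
        real_inner_comm T B]
    have hr : ∀ A B : V, ⟪A, S B⟫_ℝ = μ * ⟪A, B⟫_ℝ + k * ⟪A, T⟫_ℝ * ⟪B, T⟫_ℝ := by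
      intro A B
      rw [← hS A B, hℓ]
    simp only [gaussForm, hr, hℓ, hTT]
    linear_combination
      (⟪Y, Z⟫_ℝ * ⟪X, T⟫_ℝ * ⟪W, T⟫_ℝ + ⟪Y, W⟫_ℝ * ⟪X, T⟫_ℝ * ⟪Z, T⟫_ℝ
        - ⟪X, Z⟫_ℝ * ⟪Y, T⟫_ℝ * ⟪W, T⟫_ℝ - ⟪X, W⟫_ℝ * ⟪Y, T⟫_ℝ * ⟪Z, T⟫_ℝ) *
      (k * hlm + k * μ * hkt - ε * k * hc)
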